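/- Let μ ∈ ℝⁿ, let A be a real n×n matrix, let L be a real m×n matrix satisfying LᵀL = Iₙ and 1ₘᵀL = 0ₙᵀ, let R be a real n×n orthogonal matrix, and let Q be a real m×m permutation matrix. Define X = 1ₘμᵀ + √m·QLRA. Then the sample mean of X matches the target: m⁻¹·1ₘᵀX = μᵀ; and the sample covariance of X matches the target: m⁻¹·(X − 1ₘμᵀ)ᵀ(X − 1ₘμᵀ) = AᵀA. -/

import Mathlib

open Matrix

theorem stmt_10 (m n : ℕ) (hm : 0 < m)
    (μ : Fin n → ℝ) (A : Matrix (Fin n) (Fin n) ℝ)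
    (L : Matrix (Fin m) (Fin n) ℝ)
    (hL1 : Lᵀ * L = 1) (hL2 : ∀ j : Fin n, ∑ i, L i j = 0)
    (R : Matrix (Fin n) (Fin n) ℝ) (hR : Rᵀ * R = 1)
    (Q : Matrix (Fin m) (Fin m) ℝ)
    (hQ : ∃ σ : Equiv.Perm (Fin m), Q = σ.permMatrix ℝ)
    (J : Matrix (Fin m) (Fin n) ℝ) (hJ : J = Matrix.of fun _ j => μ j)
    (X : Matrix (Fin m) (Fin n) ℝ)
    (hX : X = J + Real.sqrt m • (Q * L * R * A)) :
    (∀ j : Fin n, (m : ℝ)⁻¹ * ∑ i, X i j = μ j) ∧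
    (m : ℝ)⁻¹ • ((X - J)ᵀ * (X - J)) = Aᵀ * A := by
  obtain ⟨σ, hσ⟩ := hQ
  have hm' : (m : ℝ) ≠ 0 := Nat.cast_ne_zero.mpr hm.ne'
  have hQQ : Qᵀ * Q = 1 := by
    subst hσ
    ext i j
    simp [Matrix.mul_apply, Matrix.transpose_apply, PEquiv.toMatrix_apply,
      Equiv.Perm.permMatrix, Equiv.toPEquiv_apply, Matrix.one_apply, Finset.sum_ite_eq',
      eq_comm, σ.injective.eq_iff]
    rw [Finset.sum_eq_single (σ.symm i) (by intro b _ hb; simp [hb]) (by simp)]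
    simp [Finset.sum_ite_eq', eq_comm]
  -- column sums of Q*L*R*A vanish
  have hcol : ∀ j : Fin n, ∑ i, (Q * L * R * A) i j = 0 := by
    intro j
    have h1 : ∀ (M : Matrix (Fin m) (Fin n) ℝ) (j : Fin n),
        ∑ i, (Q * M) i j = ∑ i, M i j := by
      intro M j
      subst hσ
      simp only [Matrix.mul_apply]
      rw [Finset.sum_comm]
      congr 1
      ext k
      simp only [PEquiv.toMatrix_apply, Equiv.Perm.permMatrix, Equiv.toPEquiv_apply,
        Matrix.one_apply, Option.mem_def, Option.some.injEq, mul_ite, mul_one, mul_zero,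
        ite_mul, one_mul, zero_mul]
      rw [Equiv.sum_comp σ (fun y => if y = k then M k j else 0)]
      simp
    have h2 : ∑ i, (L * (R * A)) i j = 0 := by
      simp only [Matrix.mul_apply]
      rw [Finset.sum_comm]
      simp [← Finset.sum_mul, hL2]
    calc ∑ i, (Q * L * R * A) i j = ∑ i, (Q * (L * (R * A))) i j := by
          rw [Matrix.mul_assoc, Matrix.mul_assoc]
      _ = ∑ i, (L * (R * A)) i j := h1 _ j
      _ = 0 := h2
  constructor
  · intro j
    have : ∑ i, X i j = m * μ j := by
      subst hX hJ
      simp only [Matrix.add_apply, Matrix.smul_apply, Matrix.of_apply, Finset.sum_add_distrib]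
      rw [Finset.sum_const, ← Finset.smul_sum, hcol j]
      simp [mul_comm]
    rw [this, ← mul_assoc, inv_mul_cancel₀ hm', one_mul]
  · have hXJ : X - J = Real.sqrt m • (Q * L * R * A) := by rw [hX]; abel
    rw [hXJ]
    rw [Matrix.transpose_smul, Matrix.smul_mul, Matrix.mul_smul, smul_smul, smul_smul]
    have hs : Real.sqrt m * Real.sqrt m = m :=
      Real.mul_self_sqrt (Nat.cast_nonneg m)
    rw [mul_assoc, hs, inv_mul_cancel₀ hm', one_smul]
    have : (Q * L * R * A)ᵀ * (Q * L * R * A) = Aᵀ * A := by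
      simp only [Matrix.transpose_mul]
      simp only [Matrix.mul_assoc]
      rw [← Matrix.mul_assoc Qᵀ Q, hQQ, Matrix.one_mul, ← Matrix.mul_assoc Lᵀ L, hL1,
        Matrix.one_mul, ← Matrix.mul_assoc Rᵀ R, hR, Matrix.one_mul]
    rw [this]
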